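/- arXiv:2312.06659 — 2 statements merged into one kernel-verified Lean document; each statement's English description precedes it below -/
import Mathlib

section
/- (Optimized accuracy of the soft-min MFG fixed point.) Under Assumption (Lip), L_p < |𝒳|c_min, suppose there is a unique triple (μ̂, Q*_{μ̂}, π̂) with π̂ = argmin_e Q*_{μ̂}, μ̂ = P^{π̂,μ̂}μ̂, and Q*_{μ̂} the unique fixed point of B_{μ̂}; let δ > 0 be the action gap of Q*_{μ̂}, assume φ_max − 1/δ > 0, and take φ = φ_max − 1/δ. Then ‖μ*φ − μ̂‖₁ ≤ (2√|𝒜|·δ·(1−γ)/(L_f + (γ/(1−γ))L_p‖f‖∞))·exp(1 − φ_max δ) and ‖Q*_{μ*φ} − Q*_{μ̂}‖∞ ≤ 2√|𝒜|·δ·exp(1 − φ_max δ). -/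
open Finset Filter
open scoped Classical

noncomputable section

variable {X A : Type*}

/-- A probability vector on a finite set. -/
def IsProb [Fintype X] (μ : X → ℝ) : Prop := (∀ x, 0 ≤ μ x) ∧ ∑ x, μ x = 1

/-- ℓ¹ norm of a signed measure / vector on a finite set. -/
def l1 [Fintype X] (μ : X → ℝ) : ℝ := ∑ x, |μ x|

/-- Sup norm of a Q-table. -/
def supQ [Fintype X] [Fintype A] [Nonempty X] [Nonempty A] (Q : X → A → ℝ) : ℝ :=
  Finset.univ.sup' Finset.univ_nonempty (fun xa : X × A => |Q xa.1 xa.2|)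

/-- Minimum of a row of a Q-table (minimum over actions). -/
def minRow [Fintype A] [Nonempty A] (q : A → ℝ) : ℝ :=
  Finset.univ.inf' Finset.univ_nonempty q

/-- The soft-min distribution over actions with parameter φ. -/
def softmin [Fintype A] (φ : ℝ) (z : A → ℝ) (a : A) : ℝ :=
  Real.exp (-φ * z a) / ∑ a', Real.exp (-φ * z a')

/-- The argmin_e policy: uniform over the minimizers, zero elsewhere. -/
def argminE [Fintype A] [Nonempty A] (q : A → ℝ) (a : A) : ℝ :=
  if q a = minRow q then (1 : ℝ) / (Finset.univ.filter fun a' => q a' = minRow q).card else 0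

/-- (P^{π,μ} ν)(x) = ∑_{x'} ν(x') ∑_a π(a|x') p(x|x',a,μ). -/
def Ppush [Fintype X] [Fintype A] (p : X → A → (X → ℝ) → X → ℝ)
    (π : X → A → ℝ) (μ ν : X → ℝ) (x : X) : ℝ :=
  ∑ x', ν x' * ∑ a, π x' a * p x' a μ x

/-- P₂(Q,μ) = P^{softmin_φ Q, μ} μ − μ. -/
def P2 [Fintype X] [Fintype A] (φ : ℝ) (p : X → A → (X → ℝ) → X → ℝ)
    (Q : X → A → ℝ) (μ : X → ℝ) (x : X) : ℝ :=
  Ppush p (fun x' => softmin φ (Q x')) μ μ x - μ x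

/-- The Bellman operator (B_μ Q)(x,a) = f(x,a,μ) + γ ∑_{x'} p(x'|x,a,μ) min_{a'} Q(x',a'). -/
def bell [Fintype X] [Fintype A] [Nonempty A]
    (f : X → A → (X → ℝ) → ℝ) (p : X → A → (X → ℝ) → X → ℝ) (γ : ℝ)
    (μ : X → ℝ) (Q : X → A → ℝ) (x : X) (a : A) : ℝ :=
  f x a μ + γ * ∑ x', p x a μ x' * minRow (Q x')

/-- T₂(Q,μ) = B_μ Q − Q. -/
def T2 [Fintype X] [Fintype A] [Nonempty A]
    (f : X → A → (X → ℝ) → ℝ) (p : X → A → (X → ℝ) → X → ℝ) (γ : ℝ)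
    (Q : X → A → ℝ) (μ : X → ℝ) (x : X) (a : A) : ℝ :=
  bell f p γ μ Q x a - Q x a

namespace MFGaux
open Finset

variable {X A : Type*}

lemma sum_exp_pos [Fintype A] [Nonempty A] (g : A → ℝ) : 0 < ∑ a, Real.exp (g a) :=
  Finset.sum_pos (fun a _ => Real.exp_pos _) Finset.univ_nonempty

lemma softmin_nonneg' [Fintype A] [Nonempty A] (φ : ℝ) (z : A → ℝ) (a : A) : 0 ≤ softmin φ z a :=
  div_nonneg (Real.exp_pos _).le (sum_exp_pos _).le

lemma softmin_sum [Fintype A] [Nonempty A] (φ : ℝ) (z : A → ℝ) : ∑ a, softmin φ z a = 1 := by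
  simp only [softmin, ← Finset.sum_div]
  exact div_self (sum_exp_pos _).ne'

lemma le_supQ [Fintype X] [Fintype A] [Nonempty X] [Nonempty A] (Q : X → A → ℝ) (x : X) (a : A) :
    |Q x a| ≤ supQ Q := Finset.le_sup' (fun xa : X × A => |Q xa.1 xa.2|) (Finset.mem_univ (x, a))

lemma supQ_le [Fintype X] [Fintype A] [Nonempty X] [Nonempty A] (Q : X → A → ℝ) (M : ℝ)
    (h : ∀ x a, |Q x a| ≤ M) : supQ Q ≤ M :=
  Finset.sup'_le _ _ (fun xa _ => h xa.1 xa.2)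

lemma supQ_nonneg [Fintype X] [Fintype A] [Nonempty X] [Nonempty A] (Q : X → A → ℝ) :
    0 ≤ supQ Q := by
  obtain ⟨x⟩ := (inferInstance : Nonempty X)
  obtain ⟨a⟩ := (inferInstance : Nonempty A)
  exact (abs_nonneg _).trans (le_supQ Q x a)

lemma minRow_le [Fintype A] [Nonempty A] (q : A → ℝ) (a : A) : minRow q ≤ q a :=
  Finset.inf'_le _ (Finset.mem_univ a)

lemma exists_minRow [Fintype A] [Nonempty A] (q : A → ℝ) : ∃ a, minRow q = q a := by
  obtain ⟨a, -, ha⟩ := Finset.exists_mem_eq_inf' (Finset.univ_nonempty) q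
  exact ⟨a, ha⟩

lemma abs_minRow_le [Fintype A] [Nonempty A] (q : A → ℝ) (M : ℝ) (h : ∀ a, |q a| ≤ M) :
    |minRow q| ≤ M := by
  obtain ⟨a, ha⟩ := exists_minRow q
  rw [ha]; exact h a

lemma abs_minRow_sub [Fintype A] [Nonempty A] (q q' : A → ℝ) (M : ℝ)
    (h : ∀ a, |q a - q' a| ≤ M) : |minRow q - minRow q'| ≤ M := by
  rw [abs_sub_le_iff]
  constructor
  · obtain ⟨a, ha⟩ := exists_minRow q'
    have h1 := minRow_le q a
    have h2 := (abs_le.mp (h a)).2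
    linarith
  · obtain ⟨a, ha⟩ := exists_minRow q
    have h1 := minRow_le q' a
    have h2 := (abs_le.mp (h a)).1
    linarith

lemma l1_nonneg [Fintype X] (μ : X → ℝ) : 0 ≤ l1 μ :=
  Finset.sum_nonneg (fun x _ => abs_nonneg _)

/-- generic row bound: `∑ₓ |∑ₐ cₐ gₐ(x)| ≤ B⋅C` if `∑ₐ|cₐ| ≤ B` and `∑ₓ|gₐ(x)| ≤ C`. -/
lemma sum_abs_mix [Fintype X] [Fintype A] (c : A → ℝ) (g : A → X → ℝ) (B C : ℝ)
    (hB : ∑ a, |c a| ≤ B) (hC : ∀ a, ∑ x, |g a x| ≤ C) (hC0 : 0 ≤ C) :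
    ∑ x, |∑ a, c a * g a x| ≤ B * C := by
  calc ∑ x, |∑ a, c a * g a x| ≤ ∑ x, ∑ a, |c a| * |g a x| := by
        apply Finset.sum_le_sum
        intro x _
        refine (Finset.abs_sum_le_sum_abs _ _).trans ?_
        apply Finset.sum_le_sum
        intro a _
        rw [abs_mul]
    _ = ∑ a, |c a| * ∑ x, |g a x| := by
        rw [Finset.sum_comm]
        exact Finset.sum_congr rfl (fun a _ => (Finset.mul_sum _ _ _).symm)
    _ ≤ ∑ a, |c a| * C :=
        Finset.sum_le_sum (fun a _ => mul_le_mul_of_nonneg_left (hC a) (abs_nonneg _))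
    _ = (∑ a, |c a|) * C := (Finset.sum_mul _ _ _).symm
    _ ≤ B * C := mul_le_mul_of_nonneg_right hB hC0

/-- Dobrushin-type contraction. -/
lemma dobrushin [Fintype X] (σ : X → ℝ) (hσ : ∑ x, σ x = 0) (K : X → X → ℝ) (c : ℝ)
    (hc : ∀ x' x, c ≤ K x' x) (hrow : ∀ x', ∑ x, K x' x = 1) :
    ∑ x, |∑ x', σ x' * K x' x| ≤ (1 - (Fintype.card X : ℝ) * c) * ∑ x, |σ x| := by
  have key : ∀ x, ∑ x', σ x' * K x' x = ∑ x', σ x' * (K x' x - c) := by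
    intro x
    rw [← sub_eq_zero, ← Finset.sum_sub_distrib]
    have : ∀ x' ∈ Finset.univ, σ x' * K x' x - σ x' * (K x' x - c) = σ x' * c := by
      intro x' _; ring
    rw [Finset.sum_congr rfl this, ← Finset.sum_mul, hσ, zero_mul]
  calc ∑ x, |∑ x', σ x' * K x' x| ≤ ∑ x, ∑ x', |σ x'| * (K x' x - c) := by
        apply Finset.sum_le_sum
        intro x _
        rw [key x]
        refine (Finset.abs_sum_le_sum_abs _ _).trans ?_
        apply Finset.sum_le_sum
        intro x' _
        rw [abs_mul, abs_of_nonneg (show (0:ℝ) ≤ K x' x - c by linarith [hc x' x])]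
    _ = ∑ x', |σ x'| * (1 - (Fintype.card X : ℝ) * c) := by
        rw [Finset.sum_comm]
        apply Finset.sum_congr rfl
        intro x' _
        rw [← Finset.mul_sum]
        congr 1
        rw [Finset.sum_sub_distrib, hrow x', Finset.sum_const, nsmul_eq_mul, Fintype.card]
    _ = (1 - (Fintype.card X : ℝ) * c) * ∑ x, |σ x| := by
        rw [← Finset.sum_mul, mul_comm]

lemma softmin_lip [Fintype A] [Nonempty A] (φ d : ℝ) (hφ : 0 ≤ φ) (hd0 : 0 ≤ d)
    (z z' : A → ℝ) (hd : ∀ a, |z a - z' a| ≤ d) :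
    ∑ a, |softmin φ z' a - softmin φ z a| ≤ 2 * φ * d := by
  set w : A → ℝ := fun a => z' a - z a with hw
  set E : A → ℝ → ℝ := fun a t => Real.exp (-φ * (z a + t * w a)) with hE
  set S : ℝ → ℝ := fun t => ∑ a, E a t with hS
  have hSpos : ∀ t, 0 < S t := fun t => Finset.sum_pos (fun a _ => Real.exp_pos _) Finset.univ_nonempty
  set S' : ℝ → ℝ := fun t => ∑ b, (-φ * w b) * E b t with hS'
  set ε : A → ℝ := fun a => if softmin φ z' a - softmin φ z a < 0 then -1 else 1 with hε
  set F : ℝ → ℝ := fun t => ∑ a, ε a * (E a t / S t) with hF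
  have hEd : ∀ a t, HasDerivAt (fun t => E a t) ((-φ * w a) * E a t) t := by
    intro a t
    have h1 : HasDerivAt (fun t : ℝ => -φ * (z a + t * w a)) (-φ * w a) t := by
      have := ((hasDerivAt_id t).mul_const (w a)).const_add (z a)
      simpa using this.const_mul (-φ)
    simpa [hE, mul_comm] using h1.exp
  have hSd : ∀ t, HasDerivAt S (S' t) t := by
    intro t
    simpa [hS, hS'] using HasDerivAt.fun_sum (fun a _ => hEd a t)
  have hFd : ∀ t, HasDerivAt F (∑ a, ε a * (((-φ * w a) * E a t * S t - E a t * S' t) / (S t)^2)) t := by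
    intro t
    apply HasDerivAt.fun_sum
    intro a _
    exact ((hEd a t).div (hSd t) (hSpos t).ne').const_mul (ε a)
  have hwb : ∀ a, |w a| ≤ d := by
    intro a; rw [hw]; simpa [abs_sub_comm] using hd a
  have bound : ∀ t, |∑ a, ε a * (((-φ * w a) * E a t * S t - E a t * S' t) / (S t)^2)| ≤ 2 * φ * d := by
    intro t
    calc |∑ a, ε a * (((-φ * w a) * E a t * S t - E a t * S' t) / (S t)^2)|
        ≤ ∑ a, |ε a * (((-φ * w a) * E a t * S t - E a t * S' t) / (S t)^2)| :=
          Finset.abs_sum_le_sum_abs _ _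
      _ ≤ ∑ a, (2 * φ * d) * (E a t / S t) := by
          apply Finset.sum_le_sum
          intro a _
          have hεa : |ε a| = 1 := by rw [hε]; dsimp; split <;> simp
          have hEpos : ∀ b, 0 < E b t := fun b => Real.exp_pos _
          have key : (-φ * w a) * E a t * S t - E a t * S' t
              = E a t * ∑ b, E b t * (φ * (w b - w a)) := by
            simp only [hS, hS', Finset.mul_sum, Finset.sum_mul, ← Finset.sum_sub_distrib]
            exact Finset.sum_congr rfl (fun b _ => by ring)
          rw [abs_mul, hεa, one_mul, key, abs_div, abs_mul, abs_of_pos (hEpos a),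
            abs_of_pos (pow_pos (hSpos t) 2)]
          have h2 : |∑ b, E b t * (φ * (w b - w a))| ≤ S t * (2 * φ * d) := by
            calc |∑ b, E b t * (φ * (w b - w a))| ≤ ∑ b, |E b t * (φ * (w b - w a))| :=
                  Finset.abs_sum_le_sum_abs _ _
              _ ≤ ∑ b, E b t * (2 * φ * d) := by
                  apply Finset.sum_le_sum
                  intro b _
                  rw [abs_mul, abs_of_pos (hEpos b)]
                  apply mul_le_mul_of_nonneg_left _ (hEpos b).le
                  rw [abs_mul, abs_of_nonneg hφ]
                  calc φ * |w b - w a| ≤ φ * (2 * d) := by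
                        apply mul_le_mul_of_nonneg_left _ hφ
                        calc |w b - w a| ≤ |w b| + |w a| := abs_sub _ _
                          _ ≤ d + d := add_le_add (hwb b) (hwb a)
                          _ = 2 * d := by ring
                    _ = 2 * φ * d := by ring
              _ = S t * (2 * φ * d) := by rw [hS, Finset.sum_mul]
          calc E a t * |∑ b, E b t * (φ * (w b - w a))| / S t ^ 2
              ≤ E a t * (S t * (2 * φ * d)) / S t ^ 2 := by gcongr
            _ = 2 * φ * d * (E a t / S t) := by
                field_simp
      _ = (2 * φ * d) * ∑ a, E a t / S t := by rw [Finset.mul_sum]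
      _ = 2 * φ * d := by
          rw [← Finset.sum_div, div_self (hSpos t).ne', mul_one]
  have mvt : |F 1 - F 0| ≤ 2 * φ * d := by
    have := norm_image_sub_le_of_norm_deriv_le_segment_01'
      (f := F) (f' := fun t => ∑ a, ε a * (((-φ * w a) * E a t * S t - E a t * S' t) / (S t)^2))
      (C := 2 * φ * d)
      (fun x _ => (hFd x).hasDerivWithinAt)
      (fun x _ => by simpa using bound x)
    simpa using this
  have hF1 : F 1 - F 0 = ∑ a, |softmin φ z' a - softmin φ z a| := by
    rw [hF]
    dsimp only
    rw [← Finset.sum_sub_distrib]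
    apply Finset.sum_congr rfl
    intro a _
    have harg : ∀ x, z x + 1 * (w x) = z' x := by intro x; rw [hw]; ring
    have e1 : E a 1 / S 1 = softmin φ z' a := by
      simp only [hE, hS, softmin, harg]
    have e0 : E a 0 / S 0 = softmin φ z a := by
      simp only [hE, hS, softmin, zero_mul, add_zero]
    rw [← mul_sub, e1, e0, hε]
    dsimp only
    split
    · rw [abs_of_neg (by assumption)]; ring
    · rw [abs_of_nonneg (by linarith [not_lt.mp (by assumption)])]; ring
  rw [← hF1]
  calc F 1 - F 0 ≤ |F 1 - F 0| := le_abs_self _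
    _ ≤ 2 * φ * d := mvt

lemma softmin_argmin [Fintype A] [Nonempty A] (φ δ : ℝ) (hφ : 0 ≤ φ) (hδ : 0 < δ) (q : A → ℝ)
    (hgap : ∀ a, minRow q < q a → minRow q + δ ≤ q a) :
    ∑ a, |softmin φ q a - argminE q a| ≤ 2 * (Fintype.card A : ℝ) * Real.exp (-(φ * δ)) := by
  set m := minRow q with hm
  set SS := Finset.univ.filter (fun a => q a = m) with hSS
  set k := SS.card with hk
  set r : A → ℝ := fun a => Real.exp (-φ * (q a - m)) with hr
  set Z := ∑ a, r a with hZ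
  have hrpos : ∀ a, 0 < r a := fun a => Real.exp_pos _
  have hZpos : 0 < Z := Finset.sum_pos (fun a _ => hrpos a) Finset.univ_nonempty
  have hmle : ∀ a, m ≤ q a := fun a => Finset.inf'_le _ (Finset.mem_univ a)
  have hk1 : 1 ≤ k := by
    obtain ⟨a0, -, ha0⟩ := Finset.exists_mem_eq_inf' (Finset.univ_nonempty) q
    exact Finset.card_pos.mpr ⟨a0, Finset.mem_filter.mpr ⟨Finset.mem_univ _, ha0.symm⟩⟩
  have hkpos : (0:ℝ) < k := by exact_mod_cast hk1
  have hrSS : ∀ a ∈ SS, r a = 1 := by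
    intro a ha
    rw [hr]
    simp [(Finset.mem_filter.mp ha).2]
  have hsplit : ∑ a ∈ SS, r a + ∑ a ∈ Finset.univ.filter (fun a => ¬ q a = m), r a = Z :=
    Finset.sum_filter_add_sum_filter_not _ _ _
  have hSSsum : ∑ a ∈ SS, r a = (k:ℝ) := by
    rw [Finset.sum_congr rfl hrSS]; simp [hk]
  have hrout : ∀ a, ¬ q a = m → r a ≤ Real.exp (-(φ * δ)) := by
    intro a ha
    have h1 : m + δ ≤ q a := hgap a (lt_of_le_of_ne (hmle a) (Ne.symm ha))
    rw [hr]
    apply Real.exp_le_exp.mpr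
    nlinarith
  have houtsum : ∑ a ∈ Finset.univ.filter (fun a => ¬ q a = m), r a
      ≤ (Fintype.card A : ℝ) * Real.exp (-(φ * δ)) := by
    calc ∑ a ∈ Finset.univ.filter (fun a => ¬ q a = m), r a
        ≤ ∑ a ∈ Finset.univ.filter (fun a => ¬ q a = m), Real.exp (-(φ * δ)) :=
          Finset.sum_le_sum (fun a ha => hrout a (Finset.mem_filter.mp ha).2)
      _ = ((Finset.univ.filter (fun a => ¬ q a = m)).card : ℝ) * Real.exp (-(φ * δ)) := by
          rw [Finset.sum_const, nsmul_eq_mul]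
      _ ≤ (Fintype.card A : ℝ) * Real.exp (-(φ * δ)) := by
          apply mul_le_mul_of_nonneg_right _ (Real.exp_pos _).le
          exact_mod_cast Finset.card_filter_le _ _
  have hZk : (k:ℝ) ≤ Z := by
    rw [← hsplit, hSSsum]
    have : 0 ≤ ∑ a ∈ Finset.univ.filter (fun a => ¬ q a = m), r a :=
      Finset.sum_nonneg (fun a _ => (hrpos a).le)
    linarith
  have hZ1 : (1:ℝ) ≤ Z := le_trans (by exact_mod_cast hk1) hZk
  have hsm : ∀ a, softmin φ q a = r a / Z := by
    intro a
    rw [softmin]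
    have key : ∀ b, Real.exp (-φ * q b) = Real.exp (-φ * m) * r b := by
      intro b
      rw [hr, ← Real.exp_add]
      congr 1
      ring
    rw [key]
    have : ∑ a', Real.exp (-φ * q a') = Real.exp (-φ * m) * Z := by
      rw [hZ, Finset.mul_sum]
      exact Finset.sum_congr rfl (fun b _ => key b)
    rw [this, mul_div_mul_left _ _ (Real.exp_pos _).ne']
  rw [← Finset.sum_filter_add_sum_filter_not Finset.univ (fun a => q a = m)
    (fun a => |softmin φ q a - argminE q a|)]
  have hin : ∑ a ∈ SS, |softmin φ q a - argminE q a|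
      ≤ (Fintype.card A : ℝ) * Real.exp (-(φ * δ)) := by
    have step : ∀ a ∈ SS, |softmin φ q a - argminE q a| = 1/(k:ℝ) - 1/Z := by
      intro a ha
      have hq : q a = m := (Finset.mem_filter.mp ha).2
      rw [hsm a, hrSS a ha, argminE, if_pos hq, ← hSS, ← hk]
      rw [abs_of_nonpos]
      · ring
      · have : 1/Z ≤ 1/(k:ℝ) := one_div_le_one_div_of_le hkpos hZk
        linarith
    rw [Finset.sum_congr rfl step, Finset.sum_const, nsmul_eq_mul, ← hk]
    have e1 : (k:ℝ) * (1/(k:ℝ) - 1/Z) = 1 - k/Z := by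
      field_simp
    rw [e1]
    have e2 : 1 - (k:ℝ)/Z = (Z - k)/Z := by field_simp
    rw [e2]
    have e3 : Z - (k:ℝ) = ∑ a ∈ Finset.univ.filter (fun a => ¬ q a = m), r a := by
      rw [← hsplit, hSSsum]; ring
    calc (Z - (k:ℝ))/Z ≤ Z - (k:ℝ) := by
          apply div_le_self _ hZ1
          linarith
      _ ≤ (Fintype.card A : ℝ) * Real.exp (-(φ * δ)) := by rw [e3]; exact houtsum
  have hout : ∑ a ∈ Finset.univ.filter (fun a => ¬ q a = m), |softmin φ q a - argminE q a|
      ≤ (Fintype.card A : ℝ) * Real.exp (-(φ * δ)) := by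
    calc ∑ a ∈ Finset.univ.filter (fun a => ¬ q a = m), |softmin φ q a - argminE q a|
        ≤ ∑ a ∈ Finset.univ.filter (fun a => ¬ q a = m), r a := by
          apply Finset.sum_le_sum
          intro a ha
          have hq : ¬ q a = m := (Finset.mem_filter.mp ha).2
          rw [argminE, if_neg hq, sub_zero, hsm a, abs_of_nonneg (div_nonneg (hrpos a).le hZpos.le)]
          exact div_le_self (hrpos a).le hZ1
      _ ≤ (Fintype.card A : ℝ) * Real.exp (-(φ * δ)) := houtsum
  calc ∑ a ∈ SS, |softmin φ q a - argminE q a|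
        + ∑ a ∈ Finset.univ.filter (fun a => ¬ q a = m), |softmin φ q a - argminE q a|
      ≤ (Fintype.card A : ℝ) * Real.exp (-(φ * δ)) + (Fintype.card A : ℝ) * Real.exp (-(φ * δ)) :=
        add_le_add hin hout
    _ = 2 * (Fintype.card A : ℝ) * Real.exp (-(φ * δ)) := by ring


lemma qstar_bdd [Fintype X] [Fintype A] [Nonempty X] [Nonempty A]
    (γ : ℝ) (hγ0 : 0 ≤ γ) (hγ1 : γ < 1)
    (f : X → A → (X → ℝ) → ℝ) (fnorm : ℝ) (p : X → A → (X → ℝ) → X → ℝ)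
    (μ : X → ℝ)
    (hfμ : ∀ x a, |f x a μ| ≤ fnorm)
    (hp0 : ∀ x a x', 0 ≤ p x a μ x') (hp1 : ∀ x a, ∑ x', p x a μ x' = 1)
    (Q : X → A → ℝ) (hfix : bell f p γ μ Q = Q) :
    ∀ x a, |Q x a| ≤ fnorm / (1 - γ) := by
  have h1γ : 0 < 1 - γ := by linarith
  set M := supQ Q with hM
  have hMb : ∀ x a, |Q x a| ≤ M := fun x a => le_supQ Q x a
  have hmr : ∀ x', |minRow (Q x')| ≤ M := fun x' => abs_minRow_le _ _ (hMb x')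
  have hstep : M ≤ fnorm + γ * M := by
    apply supQ_le
    intro x a
    have hxa : bell f p γ μ Q x a = Q x a := by rw [hfix]
    rw [← hxa, bell]
    calc |f x a μ + γ * ∑ x', p x a μ x' * minRow (Q x')|
        ≤ |f x a μ| + γ * |∑ x', p x a μ x' * minRow (Q x')| := by
          refine (abs_add_le _ _).trans ?_
          rw [abs_mul, abs_of_nonneg hγ0]
      _ ≤ fnorm + γ * M := by
          refine add_le_add (hfμ x a) (mul_le_mul_of_nonneg_left ?_ hγ0)
          refine (Finset.abs_sum_le_sum_abs _ _).trans ?_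
          calc ∑ x', |p x a μ x' * minRow (Q x')|
              ≤ ∑ x', p x a μ x' * M := by
                apply Finset.sum_le_sum
                intro x' _
                rw [abs_mul, abs_of_nonneg (hp0 x a x')]
                exact mul_le_mul_of_nonneg_left (hmr x') (hp0 x a x')
            _ = M := by rw [← Finset.sum_mul, hp1 x a, one_mul]
  intro x a
  refine (hMb x a).trans ?_
  rw [le_div_iff₀ h1γ]
  nlinarith

lemma qstar_lip [Fintype X] [Fintype A] [Nonempty X] [Nonempty A]
    (γ : ℝ) (hγ0 : 0 ≤ γ) (hγ1 : γ < 1)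
    (f : X → A → (X → ℝ) → ℝ) (fnorm : ℝ) (hfn0 : 0 ≤ fnorm)
    (p : X → A → (X → ℝ) → X → ℝ) (Lf Lp : ℝ)
    (μ ν : X → ℝ)
    (hLf : ∀ x a, |f x a μ - f x a ν| ≤ Lf * l1 (fun y => μ y - ν y))
    (hLp : ∀ x a, ∑ x', |p x a μ x' - p x a ν x'| ≤ Lp * l1 (fun y => μ y - ν y))
    (hp0 : ∀ x a x', 0 ≤ p x a μ x') (hp1 : ∀ x a, ∑ x', p x a μ x' = 1)
    (Qμ Qν : X → A → ℝ) (hfixμ : bell f p γ μ Qμ = Qμ) (hfixν : bell f p γ ν Qν = Qν)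
    (hQν : ∀ x a, |Qν x a| ≤ fnorm / (1 - γ)) :
    supQ (fun x a => Qμ x a - Qν x a)
      ≤ (Lf + γ / (1 - γ) * Lp * fnorm) / (1 - γ) * l1 (fun y => μ y - ν y) := by
  have h1γ : 0 < 1 - γ := by linarith
  set L := l1 (fun y => μ y - ν y) with hL
  have hL0 : 0 ≤ L := l1_nonneg _
  set M := supQ (fun x a => Qμ x a - Qν x a) with hM
  have hMb : ∀ x a, |Qμ x a - Qν x a| ≤ M :=
    fun x a => le_supQ (fun x a => Qμ x a - Qν x a) x a
  have hmr : ∀ x', |minRow (Qμ x') - minRow (Qν x')| ≤ M :=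
    fun x' => abs_minRow_sub _ _ _ (hMb x')
  have hmrν : ∀ x', |minRow (Qν x')| ≤ fnorm / (1 - γ) :=
    fun x' => abs_minRow_le _ _ (hQν x')
  have hstep : M ≤ Lf * L + γ * (M + Lp * L * (fnorm / (1 - γ))) := by
    apply supQ_le
    intro x a
    have hxa : Qμ x a - Qν x a
        = (f x a μ - f x a ν)
          + γ * ((∑ x', p x a μ x' * (minRow (Qμ x') - minRow (Qν x')))
                  + ∑ x', (p x a μ x' - p x a ν x') * minRow (Qν x')) := by
      conv_lhs => rw [← hfixμ, ← hfixν]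
      rw [bell, bell, ← Finset.sum_add_distrib]
      have : ∀ x' ∈ Finset.univ,
          p x a μ x' * (minRow (Qμ x') - minRow (Qν x'))
            + (p x a μ x' - p x a ν x') * minRow (Qν x')
          = p x a μ x' * minRow (Qμ x') - p x a ν x' * minRow (Qν x') := by
        intro x' _; ring
      rw [Finset.sum_congr rfl this, Finset.sum_sub_distrib]
      ring
    rw [hxa]
    calc |(f x a μ - f x a ν)
          + γ * ((∑ x', p x a μ x' * (minRow (Qμ x') - minRow (Qν x')))
                  + ∑ x', (p x a μ x' - p x a ν x') * minRow (Qν x'))|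
        ≤ |f x a μ - f x a ν|
          + γ * (|∑ x', p x a μ x' * (minRow (Qμ x') - minRow (Qν x'))|
                  + |∑ x', (p x a μ x' - p x a ν x') * minRow (Qν x')|) := by
          refine (abs_add_le _ _).trans ?_
          rw [abs_mul, abs_of_nonneg hγ0]
          exact add_le_add_right (mul_le_mul_of_nonneg_left (abs_add_le _ _) hγ0) _
      _ ≤ Lf * L + γ * (M + Lp * L * (fnorm / (1 - γ))) := by
          refine add_le_add (hLf x a) (mul_le_mul_of_nonneg_left (add_le_add ?_ ?_) hγ0)
          · refine (Finset.abs_sum_le_sum_abs _ _).trans ?_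
            calc ∑ x', |p x a μ x' * (minRow (Qμ x') - minRow (Qν x'))|
                ≤ ∑ x', p x a μ x' * M := by
                  apply Finset.sum_le_sum
                  intro x' _
                  rw [abs_mul, abs_of_nonneg (hp0 x a x')]
                  exact mul_le_mul_of_nonneg_left (hmr x') (hp0 x a x')
              _ = M := by rw [← Finset.sum_mul, hp1 x a, one_mul]
          · refine (Finset.abs_sum_le_sum_abs _ _).trans ?_
            calc ∑ x', |(p x a μ x' - p x a ν x') * minRow (Qν x')|
                ≤ ∑ x', |p x a μ x' - p x a ν x'| * (fnorm / (1 - γ)) := by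
                  apply Finset.sum_le_sum
                  intro x' _
                  rw [abs_mul]
                  exact mul_le_mul_of_nonneg_left (hmrν x') (abs_nonneg _)
              _ = (∑ x', |p x a μ x' - p x a ν x'|) * (fnorm / (1 - γ)) :=
                  (Finset.sum_mul _ _ _).symm
              _ ≤ Lp * L * (fnorm / (1 - γ)) :=
                  mul_le_mul_of_nonneg_right (hLp x a) (div_nonneg hfn0 h1γ.le)
  rw [div_mul_eq_mul_div, le_div_iff₀ h1γ]
  have hexp : (Lf + γ / (1 - γ) * Lp * fnorm) * L
      = Lf * L + γ * (Lp * L * (fnorm / (1 - γ))) := by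
    field_simp
  rw [hexp]
  nlinarith

end MFGaux
set_option maxHeartbeats 2000000 in
/-- optimized accuracy of the soft-min MFG fixed point when
φ = φ_max − 1/δ. -/
theorem mfg_accuracy_optimized [Fintype X] [Fintype A] [Nonempty X] [Nonempty A]
    (γ : ℝ) (hγ0 : 0 < γ) (hγ1 : γ < 1)
    (f : X → A → (X → ℝ) → ℝ) (fnorm : ℝ)
    (hf : ∀ x a μ, IsProb μ → |f x a μ| ≤ fnorm)
    (p : X → A → (X → ℝ) → X → ℝ)
    (hp0 : ∀ x a μ x', IsProb μ → 0 ≤ p x a μ x')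
    (hp1 : ∀ x a μ, IsProb μ → ∑ x', p x a μ x' = 1)
    (cmin Lf Lp : ℝ) (hcmin0 : 0 ≤ cmin)
    (hcmin : ∀ x a μ x', IsProb μ → cmin ≤ p x a μ x')
    (hLf0 : 0 ≤ Lf) (hLp0 : 0 ≤ Lp)
    (hLf : ∀ x a μ μ', IsProb μ → IsProb μ' →
      |f x a μ - f x a μ'| ≤ Lf * l1 (fun y => μ y - μ' y))
    (hLp : ∀ x a μ μ', IsProb μ → IsProb μ' →
      ∑ x', |p x a μ x' - p x a μ' x'| ≤ Lp * l1 (fun y => μ y - μ' y))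
    (hLpc : Lp < (Fintype.card X : ℝ) * cmin)
    (φmax : ℝ)
    (hφmaxdef : φmax = ((Fintype.card X : ℝ) * cmin - Lp) / (Fintype.card A : ℝ)
        * ((1 - γ) / (Lf + (γ / (1 - γ)) * Lp * fnorm)))
    -- Q*_μ : the unique fixed point of B_μ
    (Qstar : (X → ℝ) → X → A → ℝ)
    (hQstar : ∀ μ, IsProb μ → bell f p γ μ (Qstar μ) = Qstar μ)
    -- the unique MFG equilibrium (μ̂, Q*_{μ̂}, π̂) with π̂ = argmin_e Q*_{μ̂}
    (μhat : X → ℝ) (hμhat : IsProb μhat)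
    (hμhatfix : Ppush p (fun x' => argminE (Qstar μhat x')) μhat μhat = μhat)
    (huniq : ∀ μ : X → ℝ, IsProb μ →
      Ppush p (fun x' => argminE (Qstar μ x')) μ μ = μ → μ = μhat)
    -- δ is (a positive lower bound for) the action gap of Q*_{μ̂}
    (δ : ℝ) (hδ0 : 0 < δ)
    (hgap : ∀ x a, minRow (Qstar μhat x) < Qstar μhat x a →
      minRow (Qstar μhat x) + δ ≤ Qstar μhat x a)
    (hφδ : 0 < φmax - 1 / δ)
    -- the optimized smoothing parameter
    (φ : ℝ) (hφdef : φ = φmax - 1 / δ)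
    -- μ*φ : the unique fixed point of μ ↦ P^{softmin_φ Q*_μ, μ} μ
    (μstar : X → ℝ) (hμstar : IsProb μstar)
    (hμstarfix : Ppush p (fun x' => softmin φ (Qstar μstar x')) μstar μstar = μstar) :
    l1 (fun x => μstar x - μhat x)
        ≤ 2 * Real.sqrt (Fintype.card A) * δ * (1 - γ)
            / (Lf + (γ / (1 - γ)) * Lp * fnorm) * Real.exp (1 - φmax * δ)
    ∧ supQ (fun x a => Qstar μstar x a - Qstar μhat x a)
        ≤ 2 * Real.sqrt (Fintype.card A) * δ * Real.exp (1 - φmax * δ) := by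
  classical
  have h1γ : 0 < 1 - γ := by linarith
  obtain ⟨x0⟩ := (inferInstance : Nonempty X)
  obtain ⟨a0⟩ := (inferInstance : Nonempty A)
  have hcX1 : 1 ≤ Fintype.card X := Fintype.card_pos
  have hcA1 : 1 ≤ Fintype.card A := Fintype.card_pos
  have hcApos : (0:ℝ) < (Fintype.card A : ℝ) := by positivity
  have hunif : IsProb (fun _ : X => (Fintype.card X : ℝ)⁻¹) := by
    constructor
    · intro x; positivity
    · rw [Finset.sum_const, nsmul_eq_mul, Fintype.card]
      field_simp
  have hfn0 : 0 ≤ fnorm := (abs_nonneg _).trans (hf x0 a0 _ hunif)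
  set D := Lf + γ / (1 - γ) * Lp * fnorm with hD
  have hD0 : 0 ≤ D := by
    have h1 : 0 ≤ γ / (1 - γ) * Lp * fnorm :=
      mul_nonneg (mul_nonneg (div_nonneg hγ0.le h1γ.le) hLp0) hfn0
    rw [hD]; linarith
  have hδne : δ ≠ 0 := hδ0.ne'
  have hinvδ : 0 < 1/δ := by positivity
  have hDpos : 0 < D := by
    rcases hD0.lt_or_eq with h | h
    · exact h
    · exfalso
      rw [← h, div_zero, mul_zero] at hφmaxdef
      rw [hφmaxdef] at hφδ
      linarith
  set KQ := D / (1 - γ) with hKQ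
  have hKQpos : 0 < KQ := by rw [hKQ]; positivity
  have hφpos : 0 < φ := by rw [hφdef]; linarith
  have hφmaxδ : φmax = φ + 1/δ := by rw [hφdef]; ring
  have hrel : (Fintype.card X : ℝ) * cmin - Lp = φmax * (Fintype.card A : ℝ) * KQ := by
    rw [hφmaxdef, hKQ]
    field_simp
  set E := Real.exp (-(φ * δ)) with hE
  have hEpos : 0 < E := Real.exp_pos _
  have hEexp : Real.exp (1 - φmax * δ) = E := by
    rw [hE]; congr 1; rw [hφmaxδ]; field_simp; ring
  have hsq : 1 ≤ Real.sqrt (Fintype.card A : ℝ) := by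
    rw [show (1:ℝ) = Real.sqrt 1 from (Real.sqrt_one).symm]
    apply Real.sqrt_le_sqrt
    exact_mod_cast hcA1
  rcases eq_or_lt_of_le hcA1 with hA1 | hA2
  · -- degenerate case |A| = 1 : softmin = argminE
    obtain ⟨aa, haa⟩ := Fintype.card_eq_one_iff.mp hA1.symm
    have huA : (Finset.univ : Finset A) = {aa} :=
      Finset.eq_singleton_iff_unique_mem.mpr ⟨Finset.mem_univ _, fun b _ => haa b⟩
    have hminA : ∀ z : A → ℝ, minRow z = z aa := by
      intro z
      obtain ⟨b, hb⟩ := MFGaux.exists_minRow z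
      rw [hb, haa b]
    have hsoftarg : ∀ (z : A → ℝ) (a : A), softmin φ z a = argminE z a := by
      intro z a
      have hza : z a = z aa := by rw [haa a]
      have hs1 : softmin φ z a = 1 := by
        rw [softmin, huA, Finset.sum_singleton, hza, div_self (Real.exp_pos _).ne']
      have hfilt : (Finset.univ.filter fun a' => z a' = minRow z) = Finset.univ := by
        apply Finset.filter_true_of_mem
        intro b _
        rw [hminA z, haa b]
      rw [hs1, argminE, if_pos (by rw [hminA z, hza]), hfilt]
      rw [Finset.card_univ, ← hA1]
      norm_num
    have hπeq : (fun x' => softmin φ (Qstar μstar x')) = (fun x' => argminE (Qstar μstar x')) := by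
      funext x' a; exact hsoftarg _ _
    have hms : μstar = μhat := huniq μstar hμstar (by rw [← hπeq]; exact hμstarfix)
    constructor
    · rw [hms]
      have hz : l1 (fun x : X => μhat x - μhat x) = 0 := by simp [l1]
      rw [hz]
      apply mul_nonneg (div_nonneg _ hDpos.le) (Real.exp_pos _).le
      exact mul_nonneg (mul_nonneg (mul_nonneg (by norm_num) (Real.sqrt_nonneg _)) hδ0.le) h1γ.le
    · rw [hms]
      apply MFGaux.supQ_le
      intro x a
      simp only [sub_self, abs_zero]
      apply mul_nonneg (mul_nonneg (mul_nonneg (by norm_num) (Real.sqrt_nonneg _)) hδ0.le)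
        (Real.exp_pos _).le
  · -- main case |A| ≥ 2
    have hcA2 : (2:ℝ) ≤ (Fintype.card A : ℝ) := by exact_mod_cast hA2
    set Qs := Qstar μstar with hQs
    set Qh := Qstar μhat with hQh
    have hfixs : bell f p γ μstar Qs = Qs := hQstar μstar hμstar
    have hfixh : bell f p γ μhat Qh = Qh := hQstar μhat hμhat
    have hQhb : ∀ x a, |Qh x a| ≤ fnorm / (1 - γ) :=
      MFGaux.qstar_bdd γ hγ0.le hγ1 f fnorm p μhat (fun x a => hf x a μhat hμhat)
        (fun x a x' => hp0 x a μhat x' hμhat) (fun x a => hp1 x a μhat hμhat) Qh hfixh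
    set m := l1 (fun x => μstar x - μhat x) with hm
    have hm0 : 0 ≤ m := by rw [hm]; exact MFGaux.l1_nonneg _
    have hml1 : m = ∑ x, |μstar x - μhat x| := by rw [hm]; simp [l1]
    have hQlip : supQ (fun x a => Qs x a - Qh x a) ≤ KQ * m := by
      have h := MFGaux.qstar_lip γ hγ0.le hγ1 f fnorm hfn0 p Lf Lp μstar μhat
        (fun x a => hLf x a μstar μhat hμstar hμhat)
        (fun x a => hLp x a μstar μhat hμstar hμhat)
        (fun x a x' => hp0 x a μstar x' hμstar) (fun x a => hp1 x a μstar hμstar)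
        Qs Qh hfixs hfixh hQhb
      rw [hKQ, hD, hm]
      exact h
    have hQab : ∀ x' a, |Qs x' a - Qh x' a| ≤ KQ * m :=
      fun x' a => (MFGaux.le_supQ (fun x a => Qs x a - Qh x a) x' a).trans hQlip
    have hpol1 : ∀ x', ∑ a, |softmin φ (Qs x') a - softmin φ (Qh x') a| ≤ 2 * φ * (KQ * m) :=
      fun x' => MFGaux.softmin_lip φ (KQ * m) hφpos.le (mul_nonneg hKQpos.le hm0)
        (Qh x') (Qs x') (fun a => by rw [abs_sub_comm]; exact hQab x' a)
    have hpol2 : ∀ x', ∑ a, |softmin φ (Qh x') a - argminE (Qh x') a|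
        ≤ 2 * (Fintype.card A : ℝ) * E :=
      fun x' => MFGaux.softmin_argmin φ δ hφpos.le hδ0 (Qh x') (hgap x')
    set Ks : X → X → ℝ := fun x' x => ∑ a, softmin φ (Qs x') a * p x' a μstar x with hKs
    set Kh : X → X → ℝ := fun x' x => ∑ a, argminE (Qh x') a * p x' a μhat x with hKh
    have hKslow : ∀ x' x, cmin ≤ Ks x' x := by
      intro x' x
      calc cmin = ∑ a, softmin φ (Qs x') a * cmin := by
            rw [← Finset.sum_mul, MFGaux.softmin_sum, one_mul]
        _ ≤ Ks x' x := Finset.sum_le_sum (fun a _ =>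
            mul_le_mul_of_nonneg_left (hcmin x' a μstar x hμstar) (MFGaux.softmin_nonneg' _ _ _))
    have hKsrow : ∀ x', ∑ x, Ks x' x = 1 := by
      intro x'
      calc ∑ x, Ks x' x = ∑ a, softmin φ (Qs x') a * ∑ x, p x' a μstar x := by
            rw [hKs]
            rw [Finset.sum_comm]
            exact Finset.sum_congr rfl (fun a _ => (Finset.mul_sum _ _ _).symm)
        _ = 1 := by
            have : ∀ a ∈ Finset.univ, softmin φ (Qs x') a * ∑ x, p x' a μstar x
                = softmin φ (Qs x') a := by
              intro a _
              rw [hp1 x' a μstar hμstar, mul_one]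
            rw [Finset.sum_congr rfl this, MFGaux.softmin_sum]
    have hdecomp : ∀ x, μstar x - μhat x
        = (∑ x', (μstar x' - μhat x') * Ks x' x) + ∑ x', μhat x' * (Ks x' x - Kh x' x) := by
      intro x
      have h1 : μstar x = ∑ x', μstar x' * Ks x' x := by
        conv_lhs => rw [← hμstarfix]
        simp [Ppush, hKs]
      have h2 : μhat x = ∑ x', μhat x' * Kh x' x := by
        conv_lhs => rw [← hμhatfix]
        simp [Ppush, hKh]
      rw [h1, h2, ← Finset.sum_sub_distrib, ← Finset.sum_add_distrib]
      exact Finset.sum_congr rfl (fun x' _ => by ring)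
    have hσ0 : ∑ x, (μstar x - μhat x) = 0 := by
      rw [Finset.sum_sub_distrib, hμstar.2, hμhat.2, sub_self]
    have hT1 : ∑ x, |∑ x', (μstar x' - μhat x') * Ks x' x|
        ≤ (1 - (Fintype.card X : ℝ) * cmin) * m := by
      rw [hml1]
      exact MFGaux.dobrushin _ hσ0 Ks cmin hKslow hKsrow
    have hT2row : ∀ x', ∑ x, |Ks x' x - Kh x' x|
        ≤ 2 * φ * (KQ * m) + Lp * m + 2 * (Fintype.card A : ℝ) * E := by
      intro x'
      have hsplitk : ∀ x, Ks x' x - Kh x' x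
          = (∑ a, (softmin φ (Qs x') a - softmin φ (Qh x') a) * p x' a μstar x)
            + ((∑ a, softmin φ (Qh x') a * (p x' a μstar x - p x' a μhat x))
              + ∑ a, (softmin φ (Qh x') a - argminE (Qh x') a) * p x' a μhat x) := by
        intro x
        rw [hKs, hKh]
        simp only
        rw [← Finset.sum_add_distrib, ← Finset.sum_add_distrib, ← Finset.sum_sub_distrib]
        exact Finset.sum_congr rfl (fun a _ => by ring)
      have b1 : ∑ x, |∑ a, (softmin φ (Qs x') a - softmin φ (Qh x') a) * p x' a μstar x|
          ≤ (2 * φ * (KQ * m)) * 1 :=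
        MFGaux.sum_abs_mix _ _ _ _ (hpol1 x')
          (fun a => by
            rw [show ∀ g : X → ℝ, (∑ x, |g x|) = ∑ x, |g x| from fun _ => rfl]
            have : ∀ x ∈ Finset.univ, |p x' a μstar x| = p x' a μstar x :=
              fun x _ => abs_of_nonneg (hp0 x' a μstar x hμstar)
            rw [Finset.sum_congr rfl this, hp1 x' a μstar hμstar])
          (by norm_num)
      have b2 : ∑ x, |∑ a, softmin φ (Qh x') a * (p x' a μstar x - p x' a μhat x)|
          ≤ 1 * (Lp * m) :=
        MFGaux.sum_abs_mix _ _ _ _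
          (by
            have : ∀ a ∈ Finset.univ, |softmin φ (Qh x') a| = softmin φ (Qh x') a :=
              fun a _ => abs_of_nonneg (MFGaux.softmin_nonneg' _ _ _)
            rw [Finset.sum_congr rfl this, MFGaux.softmin_sum])
          (fun a => by rw [hm]; exact hLp x' a μstar μhat hμstar hμhat)
          (mul_nonneg hLp0 hm0)
      have b3 : ∑ x, |∑ a, (softmin φ (Qh x') a - argminE (Qh x') a) * p x' a μhat x|
          ≤ (2 * (Fintype.card A : ℝ) * E) * 1 :=
        MFGaux.sum_abs_mix _ _ _ _ (hpol2 x')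
          (fun a => by
            have : ∀ x ∈ Finset.univ, |p x' a μhat x| = p x' a μhat x :=
              fun x _ => abs_of_nonneg (hp0 x' a μhat x hμhat)
            rw [Finset.sum_congr rfl this, hp1 x' a μhat hμhat])
          (by norm_num)
      calc ∑ x, |Ks x' x - Kh x' x|
          ≤ ∑ x, (|∑ a, (softmin φ (Qs x') a - softmin φ (Qh x') a) * p x' a μstar x|
              + (|∑ a, softmin φ (Qh x') a * (p x' a μstar x - p x' a μhat x)|
                + |∑ a, (softmin φ (Qh x') a - argminE (Qh x') a) * p x' a μhat x|)) := by
            apply Finset.sum_le_sum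
            intro x _
            rw [hsplitk x]
            exact (abs_add_le _ _).trans (add_le_add_right (abs_add_le _ _) _)
        _ = (∑ x, |∑ a, (softmin φ (Qs x') a - softmin φ (Qh x') a) * p x' a μstar x|)
              + ((∑ x, |∑ a, softmin φ (Qh x') a * (p x' a μstar x - p x' a μhat x)|)
                + ∑ x, |∑ a, (softmin φ (Qh x') a - argminE (Qh x') a) * p x' a μhat x|) := by
            rw [Finset.sum_add_distrib, Finset.sum_add_distrib]
        _ ≤ (2 * φ * (KQ * m)) * 1 + (1 * (Lp * m) + (2 * (Fintype.card A : ℝ) * E) * 1) :=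
            add_le_add b1 (add_le_add b2 b3)
        _ = 2 * φ * (KQ * m) + Lp * m + 2 * (Fintype.card A : ℝ) * E := by ring
    have hT2 : ∑ x, |∑ x', μhat x' * (Ks x' x - Kh x' x)|
        ≤ 2 * φ * (KQ * m) + Lp * m + 2 * (Fintype.card A : ℝ) * E := by
      calc ∑ x, |∑ x', μhat x' * (Ks x' x - Kh x' x)|
          ≤ ∑ x, ∑ x', μhat x' * |Ks x' x - Kh x' x| := by
            apply Finset.sum_le_sum
            intro x _
            refine (Finset.abs_sum_le_sum_abs _ _).trans ?_
            apply Finset.sum_le_sum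
            intro x' _
            rw [abs_mul, abs_of_nonneg (hμhat.1 x')]
        _ = ∑ x', μhat x' * ∑ x, |Ks x' x - Kh x' x| := by
            rw [Finset.sum_comm]
            exact Finset.sum_congr rfl (fun x' _ => (Finset.mul_sum _ _ _).symm)
        _ ≤ ∑ x', μhat x' * (2 * φ * (KQ * m) + Lp * m + 2 * (Fintype.card A : ℝ) * E) :=
            Finset.sum_le_sum (fun x' _ => mul_le_mul_of_nonneg_left (hT2row x') (hμhat.1 x'))
        _ = 2 * φ * (KQ * m) + Lp * m + 2 * (Fintype.card A : ℝ) * E := by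
            rw [← Finset.sum_mul, hμhat.2, one_mul]
    have hmain : m ≤ (1 - (Fintype.card X : ℝ) * cmin) * m
        + (2 * φ * (KQ * m) + Lp * m + 2 * (Fintype.card A : ℝ) * E) := by
      calc m = ∑ x, |μstar x - μhat x| := hml1
        _ ≤ ∑ x, (|∑ x', (μstar x' - μhat x') * Ks x' x|
              + |∑ x', μhat x' * (Ks x' x - Kh x' x)|) := by
            apply Finset.sum_le_sum
            intro x _
            rw [hdecomp x]
            exact abs_add_le _ _
        _ = (∑ x, |∑ x', (μstar x' - μhat x') * Ks x' x|)
              + ∑ x, |∑ x', μhat x' * (Ks x' x - Kh x' x)| := Finset.sum_add_distrib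
        _ ≤ (1 - (Fintype.card X : ℝ) * cmin) * m
              + (2 * φ * (KQ * m) + Lp * m + 2 * (Fintype.card A : ℝ) * E) :=
            add_le_add hT1 hT2
    clear_value Qs Qh Ks Kh E m KQ D
    clear hT1 hT2 hT2row hdecomp hσ0 hKsrow hKslow hpol1 hpol2 hQab hml1 hQhb hfixs hfixh huniq hμstarfix hμhatfix hQstar hgap hLf hLp hf hp0 hp1 hcmin hunif
    have hβ : ((Fintype.card X : ℝ) * cmin - Lp - 2 * φ * KQ) * m
        ≤ 2 * (Fintype.card A : ℝ) * E := by linarith [hmain]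
    have hβlow : KQ * (Fintype.card A : ℝ) / δ ≤ (Fintype.card X : ℝ) * cmin - Lp - 2 * φ * KQ := by
      rw [hrel, hφmaxδ]
      have h1 : 0 ≤ φ * ((Fintype.card A : ℝ) - 2) * KQ :=
        mul_nonneg (mul_nonneg hφpos.le (by linarith)) hKQpos.le
      have h2 : KQ * (Fintype.card A : ℝ) / δ = 1 / δ * (Fintype.card A : ℝ) * KQ := by
        field_simp
      nlinarith [h1]
    have hmKQ : m ≤ 2 * δ * E / KQ := by
      rw [le_div_iff₀ hKQpos]
      have h1 : KQ * (Fintype.card A : ℝ) / δ * m ≤ 2 * (Fintype.card A : ℝ) * E :=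
        le_trans (mul_le_mul_of_nonneg_right hβlow hm0) hβ
      have h2 : KQ * (Fintype.card A : ℝ) * m ≤ 2 * (Fintype.card A : ℝ) * E * δ := by
        calc KQ * (Fintype.card A : ℝ) * m = (KQ * (Fintype.card A : ℝ) / δ * m) * δ := by
              field_simp
          _ ≤ 2 * (Fintype.card A : ℝ) * E * δ :=
              mul_le_mul_of_nonneg_right h1 hδ0.le
      have h3 : (Fintype.card A : ℝ) * (m * KQ) ≤ (Fintype.card A : ℝ) * (2 * δ * E) := by
        linarith [h2]
      exact le_of_mul_le_mul_left h3 hcApos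
    have hgoal1 : m ≤ 2 * Real.sqrt (Fintype.card A) * δ * (1 - γ) / D * E := by
      calc m ≤ 2 * δ * E / KQ := hmKQ
        _ = 2 * δ * (1 - γ) / D * E := by
            rw [hKQ]
            field_simp
        _ ≤ 2 * Real.sqrt (Fintype.card A) * δ * (1 - γ) / D * E := by
            apply mul_le_mul_of_nonneg_right _ hEpos.le
            apply (div_le_div_iff_of_pos_right hDpos).mpr
            have hint : 0 ≤ (Real.sqrt (Fintype.card A) - 1) * δ * (1 - γ) :=
              mul_nonneg (mul_nonneg (sub_nonneg.mpr hsq) hδ0.le) h1γ.le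
            nlinarith [hint]
    constructor
    · rw [hEexp]
      exact hgoal1
    · rw [hEexp]
      refine hQlip.trans ?_
      calc KQ * m ≤ KQ * (2 * Real.sqrt (Fintype.card A) * δ * (1 - γ) / D * E) :=
            mul_le_mul_of_nonneg_left hgoal1 hKQpos.le
        _ = 2 * Real.sqrt (Fintype.card A) * δ * E := by
            rw [hKQ]
            field_simp
end
end

section
/- Under Assumption (Lip) and L_p < |𝒳|c_min, for every fixed Q : 𝒳×𝒜 → ℝ the map μ ↦ P^{softmin_φ Q, μ}μ on Δ(𝒳) satisfies ‖P^{softmin_φ Q,μ}μ − P^{softmin_φ Q,μ'}μ'‖₁ ≤ (L_p + 1 − |𝒳|c_min)‖μ − μ'‖₁ with L_p + 1 − |𝒳|c_min < 1, hence has a unique fixed point μ*_Q ∈ Δ(𝒳); moreover Q ↦ μ*_Q is Lipschitz: ‖μ*_Q − μ*_{Q'}‖₁ ≤ (φ|𝒜|/(|𝒳|c_min − L_p))·‖Q − Q'‖∞ for all Q, Q'. -/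
open Finset Filter
open scoped Classical

noncomputable section

variable {X A : Type*}

lemma softmin_denom_pos [Fintype A] [Nonempty A] (φ : ℝ) (z : A → ℝ) :
    0 < ∑ a, Real.exp (-φ * z a) :=
  Finset.sum_pos (fun _ _ => Real.exp_pos _) Finset.univ_nonempty

lemma softmin_nonneg [Fintype A] [Nonempty A] (φ : ℝ) (z : A → ℝ) (a : A) :
    0 ≤ softmin φ z a :=
  div_nonneg (Real.exp_pos _).le (softmin_denom_pos φ z).le

lemma softmin_sum_one [Fintype A] [Nonempty A] (φ : ℝ) (z : A → ℝ) :
    ∑ a, softmin φ z a = 1 := by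
  unfold softmin
  rw [← Finset.sum_div]
  exact div_self (ne_of_gt (softmin_denom_pos φ z))

lemma softmin_lip [Fintype A] [Nonempty A] (φ : ℝ) (hφ : 0 ≤ φ) (z z' : A → ℝ)
    (δ : ℝ) (hδ : ∀ b, |z b - z' b| ≤ δ) (a : A) :
    |softmin φ z a - softmin φ z' a| ≤ φ * δ := by
  have hδ0 : 0 ≤ δ := le_trans (abs_nonneg _) (hδ (Classical.arbitrary A))
  set d : A → ℝ := fun b => z' b - z b with hd
  set u : A → ℝ → ℝ := fun b t => Real.exp (-φ * (z b + t * d b)) with hu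
  set D : ℝ → ℝ := fun t => ∑ b, u b t with hD
  have hupos : ∀ b t, 0 < u b t := fun b t => Real.exp_pos _
  have hDpos : ∀ t, 0 < D t := fun t => Finset.sum_pos (fun b _ => hupos b t) Finset.univ_nonempty
  have hderivu : ∀ b t, HasDerivAt (fun t => u b t) ((-φ * d b) * u b t) t := by
    intro b t
    have h0 : HasDerivAt (fun t : ℝ => z b + t * d b) (d b) t := by
      simpa using ((hasDerivAt_id t).mul_const (d b)).const_add (z b)
    have h2 := (h0.const_mul (-φ)).exp
    simpa [hu, mul_comm] using h2
  have hderivD : ∀ t, HasDerivAt D (∑ b, (-φ * d b) * u b t) t := by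
    intro t
    have e : D = ∑ b, (fun t => u b t) := by
      rw [hD]
      funext s
      rw [Finset.sum_apply]
    rw [e]
    exact HasDerivAt.sum (fun b (_ : b ∈ Finset.univ) => hderivu b t)
  set F : ℝ → ℝ := fun t => u a t / D t with hF
  set F' : ℝ → ℝ := fun t =>
    ((-φ * d a) * u a t * D t - u a t * ∑ b, (-φ * d b) * u b t) / (D t) ^ 2 with hF'
  have hderivF : ∀ t, HasDerivAt F (F' t) t := by
    intro t
    exact (hderivu a t).div (hderivD t) (ne_of_gt (hDpos t))
  have hbound : ∀ t : ℝ, ‖F' t‖ ≤ φ * δ := by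
    intro t
    have hnum : (-φ * d a) * u a t * D t - u a t * ∑ b, (-φ * d b) * u b t
        = u a t * ∑ b, (φ * (d b - d a)) * u b t := by
      rw [hD]
      rw [Finset.mul_sum, Finset.mul_sum, Finset.mul_sum, ← Finset.sum_sub_distrib]
      exact Finset.sum_congr rfl (fun b _ => by ring)
    have habs : |∑ b, (φ * (d b - d a)) * u b t| ≤ 2 * φ * δ * (D t - u a t) := by
      calc |∑ b, (φ * (d b - d a)) * u b t| ≤ ∑ b, |(φ * (d b - d a)) * u b t| :=
            Finset.abs_sum_le_sum_abs _ _
        _ = ∑ b, (φ * |d b - d a|) * u b t := by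
            refine Finset.sum_congr rfl (fun b _ => ?_)
            rw [abs_mul, abs_mul, abs_of_nonneg hφ, abs_of_pos (hupos b t)]
        _ = ∑ b ∈ Finset.univ.erase a, (φ * |d b - d a|) * u b t := by
            rw [← Finset.sum_erase_add _ _ (Finset.mem_univ a)]
            simp
        _ ≤ ∑ b ∈ Finset.univ.erase a, (2 * φ * δ) * u b t := by
            refine Finset.sum_le_sum (fun b _ => ?_)
            have : |d b - d a| ≤ 2 * δ := by
              have h1 := hδ b; have h2 := hδ a
              rw [abs_sub_comm] at h1 h2
              calc |d b - d a| ≤ |d b| + |d a| := abs_sub _ _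
                _ ≤ δ + δ := add_le_add h1 h2
                _ = 2 * δ := by ring
            have := mul_le_mul_of_nonneg_left this hφ
            nlinarith [(hupos b t).le]
        _ = (2 * φ * δ) * ∑ b ∈ Finset.univ.erase a, u b t := by rw [Finset.mul_sum]
        _ = 2 * φ * δ * (D t - u a t) := by
            have hDt : D t = ∑ b, u b t := rfl
            rw [hDt, ← Finset.sum_erase_add _ _ (Finset.mem_univ a)]
            ring
    have hkey : u a t * (2 * φ * δ * (D t - u a t)) ≤ (φ * δ) * (D t)^2 := by
      nlinarith [sq_nonneg (D t - 2 * u a t), (hupos a t).le, mul_nonneg hφ hδ0]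
    rw [Real.norm_eq_abs, hF']
    rw [abs_div, abs_of_pos (pow_pos (hDpos t) 2)]
    rw [div_le_iff₀ (pow_pos (hDpos t) 2)]
    rw [hnum, abs_mul, abs_of_pos (hupos a t)]
    calc u a t * |∑ b, (φ * (d b - d a)) * u b t|
        ≤ u a t * (2 * φ * δ * (D t - u a t)) :=
          mul_le_mul_of_nonneg_left habs (hupos a t).le
      _ ≤ (φ * δ) * (D t)^2 := hkey
  have := Convex.norm_image_sub_le_of_norm_hasDerivWithin_le
    (f := F) (f' := F') (s := Set.univ) (C := φ * δ)
    (fun x _ => (hderivF x).hasDerivWithinAt)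
    (fun x _ => hbound x) convex_univ (Set.mem_univ (0:ℝ)) (Set.mem_univ (1:ℝ))
  have hF0 : F 0 = softmin φ z a := by
    simp [hF, hu, hD, softmin]
  have hF1 : F 1 = softmin φ z' a := by
    simp only [hF, hu, hD, hd, softmin]
    norm_num
  rw [hF1, hF0] at this
  simpa [abs_sub_comm] using this

lemma l1_nonneg [Fintype X] (μ : X → ℝ) : 0 ≤ l1 μ :=
  Finset.sum_nonneg (fun _ _ => abs_nonneg _)

lemma l1_eq_zero [Fintype X] {μ : X → ℝ} (h : l1 μ = 0) : μ = 0 := by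
  funext x
  have := (Finset.sum_eq_zero_iff_of_nonneg (fun x _ => abs_nonneg (μ x))).1 h x (Finset.mem_univ x)
  simpa [abs_eq_zero] using this

lemma l1_add_le [Fintype X] (μ ν : X → ℝ) : l1 (fun x => μ x + ν x) ≤ l1 μ + l1 ν := by
  rw [l1, l1, l1, ← Finset.sum_add_distrib]
  exact Finset.sum_le_sum (fun x _ => abs_add_le _ _)

/-- Contraction in μ for a fixed stochastic policy. -/
lemma ppush_contract [Fintype X] [Fintype A] [Nonempty X]
    (p : X → A → (X → ℝ) → X → ℝ)
    (hp0 : ∀ x a μ x', IsProb μ → 0 ≤ p x a μ x')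
    (hp1 : ∀ x a μ, IsProb μ → ∑ x', p x a μ x' = 1)
    (cmin Lp : ℝ)
    (hcmin : ∀ x a μ x', IsProb μ → cmin ≤ p x a μ x')
    (hLp : ∀ x a μ μ', IsProb μ → IsProb μ' →
      ∑ x', |p x a μ x' - p x a μ' x'| ≤ Lp * l1 (fun y => μ y - μ' y))
    (π : X → A → ℝ) (hπ0 : ∀ x a, 0 ≤ π x a) (hπ1 : ∀ x, ∑ a, π x a = 1)
    (μ μ' : X → ℝ) (hμ : IsProb μ) (hμ' : IsProb μ') :
    l1 (fun x => Ppush p π μ μ x - Ppush p π μ' μ' x)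
      ≤ (Lp + 1 - (Fintype.card X : ℝ) * cmin) * l1 (fun x => μ x - μ' x) := by
  set K : (X → ℝ) → X → X → ℝ := fun ν x' x => ∑ a, π x' a * p x' a ν x with hK
  have hsum0 : ∑ x', (μ x' - μ' x') = 0 := by
    rw [Finset.sum_sub_distrib, hμ.2, hμ'.2]; ring
  have hKge : ∀ x' x, cmin ≤ K μ x' x := by
    intro x' x
    calc cmin = ∑ a, π x' a * cmin := by rw [← Finset.sum_mul, hπ1]; ring
      _ ≤ K μ x' x := Finset.sum_le_sum (fun a _ =>
          mul_le_mul_of_nonneg_left (hcmin x' a μ x hμ) (hπ0 x' a))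
  have hKrow : ∀ ν, IsProb ν → ∀ x', ∑ x, K ν x' x = 1 := by
    intro ν hν x'
    rw [hK]
    rw [Finset.sum_comm]
    calc ∑ a, ∑ x, π x' a * p x' a ν x = ∑ a, π x' a * ∑ x, p x' a ν x := by
          refine Finset.sum_congr rfl (fun a _ => ?_); rw [Finset.mul_sum]
      _ = ∑ a, π x' a * 1 := by
          refine Finset.sum_congr rfl (fun a _ => ?_); rw [hp1 x' a ν hν]
      _ = 1 := by simpa using hπ1 x'
  have hKdiff : ∀ x', ∑ x, |K μ x' x - K μ' x' x| ≤ Lp * l1 (fun y => μ y - μ' y) := by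
    intro x'
    calc ∑ x, |K μ x' x - K μ' x' x|
        ≤ ∑ x, ∑ a, π x' a * |p x' a μ x - p x' a μ' x| := by
          refine Finset.sum_le_sum (fun x _ => ?_)
          rw [hK]
          calc |∑ a, π x' a * p x' a μ x - ∑ a, π x' a * p x' a μ' x|
              = |∑ a, π x' a * (p x' a μ x - p x' a μ' x)| := by
                rw [← Finset.sum_sub_distrib]
                congr 1
                exact Finset.sum_congr rfl (fun a _ => by ring)
            _ ≤ ∑ a, |π x' a * (p x' a μ x - p x' a μ' x)| := Finset.abs_sum_le_sum_abs _ _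
            _ = ∑ a, π x' a * |p x' a μ x - p x' a μ' x| := by
                refine Finset.sum_congr rfl (fun a _ => ?_)
                rw [abs_mul, abs_of_nonneg (hπ0 x' a)]
      _ = ∑ a, π x' a * ∑ x, |p x' a μ x - p x' a μ' x| := by
          rw [Finset.sum_comm]
          exact Finset.sum_congr rfl (fun a _ => by rw [Finset.mul_sum])
      _ ≤ ∑ a, π x' a * (Lp * l1 (fun y => μ y - μ' y)) :=
          Finset.sum_le_sum (fun a _ =>
            mul_le_mul_of_nonneg_left (hLp x' a μ μ' hμ hμ') (hπ0 x' a))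
      _ = Lp * l1 (fun y => μ y - μ' y) := by
          rw [← Finset.sum_mul, hπ1]; ring
  have key : ∀ x, Ppush p π μ μ x - Ppush p π μ' μ' x
      = ∑ x', ((μ x' - μ' x') * (K μ x' x - cmin) + μ' x' * (K μ x' x - K μ' x' x)) := by
    intro x
    have : Ppush p π μ μ x - Ppush p π μ' μ' x
        = ∑ x', ((μ x' - μ' x') * (K μ x' x - cmin) + μ' x' * (K μ x' x - K μ' x' x)
            + cmin * (μ x' - μ' x')) := by
      rw [Ppush, Ppush, ← Finset.sum_sub_distrib]
      exact Finset.sum_congr rfl (fun x' _ => by rw [hK]; ring)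
    rw [this, Finset.sum_add_distrib, ← Finset.mul_sum, hsum0]
    ring
  calc l1 (fun x => Ppush p π μ μ x - Ppush p π μ' μ' x)
      ≤ ∑ x, ∑ x', (|μ x' - μ' x'| * (K μ x' x - cmin) + μ' x' * |K μ x' x - K μ' x' x|) := by
        rw [l1]
        refine Finset.sum_le_sum (fun x _ => ?_)
        rw [key x]
        calc |∑ x', ((μ x' - μ' x') * (K μ x' x - cmin) + μ' x' * (K μ x' x - K μ' x' x))|
            ≤ ∑ x', |(μ x' - μ' x') * (K μ x' x - cmin) + μ' x' * (K μ x' x - K μ' x' x)| :=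
              Finset.abs_sum_le_sum_abs _ _
          _ ≤ ∑ x', (|μ x' - μ' x'| * (K μ x' x - cmin) + μ' x' * |K μ x' x - K μ' x' x|) := by
              refine Finset.sum_le_sum (fun x' _ => ?_)
              calc |(μ x' - μ' x') * (K μ x' x - cmin) + μ' x' * (K μ x' x - K μ' x' x)|
                  ≤ |(μ x' - μ' x') * (K μ x' x - cmin)| + |μ' x' * (K μ x' x - K μ' x' x)| :=
                    abs_add_le _ _
                _ = |μ x' - μ' x'| * (K μ x' x - cmin) + μ' x' * |K μ x' x - K μ' x' x| := by
                    rw [abs_mul, abs_mul, abs_of_nonneg (sub_nonneg.2 (hKge x' x)),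
                      abs_of_nonneg (hμ'.1 x')]
    _ = ∑ x', (|μ x' - μ' x'| * (∑ x, (K μ x' x - cmin))
          + μ' x' * ∑ x, |K μ x' x - K μ' x' x|) := by
        rw [Finset.sum_comm]
        refine Finset.sum_congr rfl (fun x' _ => ?_)
        rw [Finset.sum_add_distrib, Finset.mul_sum, Finset.mul_sum]
    _ ≤ ∑ x', (|μ x' - μ' x'| * (1 - (Fintype.card X : ℝ) * cmin)
          + μ' x' * (Lp * l1 (fun y => μ y - μ' y))) := by
        refine Finset.sum_le_sum (fun x' _ => ?_)
        have h1 : ∑ x, (K μ x' x - cmin) = 1 - (Fintype.card X : ℝ) * cmin := by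
          rw [Finset.sum_sub_distrib, hKrow μ hμ x']
          simp [mul_comm]
        rw [h1]
        exact add_le_add le_rfl
          (mul_le_mul_of_nonneg_left (hKdiff x') (hμ'.1 x'))
    _ = (Lp + 1 - (Fintype.card X : ℝ) * cmin) * l1 (fun x => μ x - μ' x) := by
        rw [Finset.sum_add_distrib, ← Finset.sum_mul, ← Finset.sum_mul, hμ'.2, l1]
        ring

/-- Changing the policy only. -/
lemma ppush_policy [Fintype X] [Fintype A]
    (p : X → A → (X → ℝ) → X → ℝ)
    (hp0 : ∀ x a μ x', IsProb μ → 0 ≤ p x a μ x')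
    (hp1 : ∀ x a μ, IsProb μ → ∑ x', p x a μ x' = 1)
    (π π' : X → A → ℝ) (μ : X → ℝ) (hμ : IsProb μ)
    (ε : ℝ) (hε0 : 0 ≤ ε) (hε : ∀ x a, |π x a - π' x a| ≤ ε) :
    l1 (fun x => Ppush p π μ μ x - Ppush p π' μ μ x) ≤ (Fintype.card A : ℝ) * ε := by
  calc l1 (fun x => Ppush p π μ μ x - Ppush p π' μ μ x)
      ≤ ∑ x, ∑ x', μ x' * ∑ a, |π x' a - π' x' a| * p x' a μ x := by
        rw [l1]
        refine Finset.sum_le_sum (fun x _ => ?_)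
        rw [Ppush, Ppush, ← Finset.sum_sub_distrib]
        calc |∑ x', (μ x' * ∑ a, π x' a * p x' a μ x - μ x' * ∑ a, π' x' a * p x' a μ x)|
            ≤ ∑ x', |μ x' * ∑ a, π x' a * p x' a μ x - μ x' * ∑ a, π' x' a * p x' a μ x| :=
              Finset.abs_sum_le_sum_abs _ _
          _ ≤ ∑ x', μ x' * ∑ a, |π x' a - π' x' a| * p x' a μ x := by
              refine Finset.sum_le_sum (fun x' _ => ?_)
              have : μ x' * ∑ a, π x' a * p x' a μ x - μ x' * ∑ a, π' x' a * p x' a μ x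
                  = μ x' * ∑ a, (π x' a - π' x' a) * p x' a μ x := by
                rw [← mul_sub, ← Finset.sum_sub_distrib]
                congr 1
                exact Finset.sum_congr rfl (fun a _ => by ring)
              rw [this, abs_mul, abs_of_nonneg (hμ.1 x')]
              refine mul_le_mul_of_nonneg_left ?_ (hμ.1 x')
              calc |∑ a, (π x' a - π' x' a) * p x' a μ x|
                  ≤ ∑ a, |(π x' a - π' x' a) * p x' a μ x| := Finset.abs_sum_le_sum_abs _ _
                _ = ∑ a, |π x' a - π' x' a| * p x' a μ x := by
                    refine Finset.sum_congr rfl (fun a _ => ?_)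
                    rw [abs_mul, abs_of_nonneg (hp0 x' a μ x hμ)]
    _ = ∑ x', μ x' * ∑ a, |π x' a - π' x' a| * ∑ x, p x' a μ x := by
        rw [Finset.sum_comm]
        refine Finset.sum_congr rfl (fun x' _ => ?_)
        rw [← Finset.mul_sum, Finset.sum_comm]
        congr 1
        exact Finset.sum_congr rfl (fun a _ => by rw [Finset.mul_sum])
    _ = ∑ x', μ x' * ∑ a, |π x' a - π' x' a| := by
        refine Finset.sum_congr rfl (fun x' _ => ?_)
        congr 1
        refine Finset.sum_congr rfl (fun a _ => ?_)
        rw [hp1 x' a μ hμ, mul_one]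
    _ ≤ ∑ x', μ x' * ((Fintype.card A : ℝ) * ε) := by
        refine Finset.sum_le_sum (fun x' _ => ?_)
        refine mul_le_mul_of_nonneg_left ?_ (hμ.1 x')
        calc ∑ a, |π x' a - π' x' a| ≤ ∑ _a : A, ε := Finset.sum_le_sum (fun a _ => hε x' a)
          _ = (Fintype.card A : ℝ) * ε := by simp [mul_comm]
    _ = (Fintype.card A : ℝ) * ε := by rw [← Finset.sum_mul, hμ.2, one_mul]

/-- for every fixed Q, the map μ ↦ P^{softmin_φ Q, μ} μ is a strict contraction
with constant L_p + 1 − |𝒳|c_min < 1, hence has a unique fixed point μ*_Q in the simplex;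
moreover Q ↦ μ*_Q is (φ|𝒜|/(|𝒳|c_min − L_p))-Lipschitz. -/
theorem mfc_mu_fixed_point [Fintype X] [Fintype A] [Nonempty X] [Nonempty A]
    (φ : ℝ) (hφ0 : 0 < φ)
    (p : X → A → (X → ℝ) → X → ℝ)
    (hp0 : ∀ x a μ x', IsProb μ → 0 ≤ p x a μ x')
    (hp1 : ∀ x a μ, IsProb μ → ∑ x', p x a μ x' = 1)
    (cmin Lp : ℝ) (hcmin0 : 0 ≤ cmin)
    (hcmin : ∀ x a μ x', IsProb μ → cmin ≤ p x a μ x')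
    (hLp0 : 0 ≤ Lp)
    (hLp : ∀ x a μ μ', IsProb μ → IsProb μ' →
      ∑ x', |p x a μ x' - p x a μ' x'| ≤ Lp * l1 (fun y => μ y - μ' y))
    (hLpc : Lp < (Fintype.card X : ℝ) * cmin)
    -- μ*_Q : the fixed point of μ ↦ P^{softmin_φ Q, μ} μ
    (mustar : (X → A → ℝ) → X → ℝ)
    (hmustar : ∀ Q : X → A → ℝ, IsProb (mustar Q) ∧
      Ppush p (fun x' => softmin φ (Q x')) (mustar Q) (mustar Q) = mustar Q) :
    (∀ (Q : X → A → ℝ) (μ μ' : X → ℝ), IsProb μ → IsProb μ' →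
        l1 (fun x => Ppush p (fun x' => softmin φ (Q x')) μ μ x
              - Ppush p (fun x' => softmin φ (Q x')) μ' μ' x)
          ≤ (Lp + 1 - (Fintype.card X : ℝ) * cmin) * l1 (fun x => μ x - μ' x))
    ∧ (Lp + 1 - (Fintype.card X : ℝ) * cmin < 1)
    ∧ (∀ Q : X → A → ℝ, ∃! μ : X → ℝ, IsProb μ ∧
        Ppush p (fun x' => softmin φ (Q x')) μ μ = μ)
    ∧ (∀ Q Q' : X → A → ℝ,
        l1 (fun x => mustar Q x - mustar Q' x)
          ≤ φ * (Fintype.card A : ℝ) / ((Fintype.card X : ℝ) * cmin - Lp)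
              * supQ (fun x a => Q x a - Q' x a)) := by
  have part1 : ∀ (Q : X → A → ℝ) (μ μ' : X → ℝ), IsProb μ → IsProb μ' →
      l1 (fun x => Ppush p (fun x' => softmin φ (Q x')) μ μ x
            - Ppush p (fun x' => softmin φ (Q x')) μ' μ' x)
        ≤ (Lp + 1 - (Fintype.card X : ℝ) * cmin) * l1 (fun x => μ x - μ' x) :=
    fun Q μ μ' hμ hμ' => ppush_contract p hp0 hp1 cmin Lp hcmin hLp
      (fun x' => softmin φ (Q x')) (fun x a => softmin_nonneg φ (Q x) a)
      (fun x => softmin_sum_one φ (Q x)) μ μ' hμ hμ'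
  have hk1 : Lp + 1 - (Fintype.card X : ℝ) * cmin < 1 := by linarith
  refine ⟨part1, hk1, ?_, ?_⟩
  · -- uniqueness of the fixed point
    intro Q
    refine ⟨mustar Q, ⟨(hmustar Q).1, (hmustar Q).2⟩, ?_⟩
    rintro μ ⟨hμP, hfix⟩
    have h := part1 Q μ (mustar Q) hμP (hmustar Q).1
    have e : (fun x => Ppush p (fun x' => softmin φ (Q x')) μ μ x
        - Ppush p (fun x' => softmin φ (Q x')) (mustar Q) (mustar Q) x)
        = fun x => μ x - mustar Q x := by
      funext x
      rw [congrFun hfix x, congrFun (hmustar Q).2 x]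
    rw [e] at h
    have hL0 : 0 ≤ l1 (fun x => μ x - mustar Q x) := l1_nonneg _
    have hL : l1 (fun x => μ x - mustar Q x) = 0 := by nlinarith
    have := l1_eq_zero hL
    funext x
    have := congrFun this x
    simpa [sub_eq_zero] using this
  · -- Lipschitz in Q
    intro Q Q'
    set S := supQ (fun x a => Q x a - Q' x a) with hSdef
    have hS : ∀ x a, |Q x a - Q' x a| ≤ S := fun x a =>
      Finset.le_sup' (fun xa : X × A => |Q xa.1 xa.2 - Q' xa.1 xa.2|) (Finset.mem_univ (x, a))
    have hS0 : 0 ≤ S :=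
      le_trans (abs_nonneg _) (hS (Classical.arbitrary X) (Classical.arbitrary A))
    have hπlip : ∀ x a, |softmin φ (Q x) a - softmin φ (Q' x) a| ≤ φ * S :=
      fun x a => softmin_lip φ hφ0.le (Q x) (Q' x) S (fun b => hS x b) a
    have h1 := part1 Q (mustar Q) (mustar Q') (hmustar Q).1 (hmustar Q').1
    have h2 := ppush_policy p hp0 hp1 (fun x => softmin φ (Q x))
      (fun x => softmin φ (Q' x)) (mustar Q') (hmustar Q').1 (φ * S)
      (mul_nonneg hφ0.le hS0) hπlip
    have e : (fun x => mustar Q x - mustar Q' x)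
        = fun x => (Ppush p (fun x' => softmin φ (Q x')) (mustar Q) (mustar Q) x
              - Ppush p (fun x' => softmin φ (Q x')) (mustar Q') (mustar Q') x)
            + (Ppush p (fun x' => softmin φ (Q x')) (mustar Q') (mustar Q') x
              - Ppush p (fun x' => softmin φ (Q' x')) (mustar Q') (mustar Q') x) := by
      funext x
      rw [← congrFun (hmustar Q).2 x, ← congrFun (hmustar Q').2 x]
      ring
    have tri : l1 (fun x => mustar Q x - mustar Q' x)
        ≤ (Lp + 1 - (Fintype.card X : ℝ) * cmin) * l1 (fun x => mustar Q x - mustar Q' x)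
          + (Fintype.card A : ℝ) * (φ * S) := by
      conv_lhs => rw [e]
      exact le_trans (l1_add_le _ _) (add_le_add h1 h2)
    have hpos : 0 < (Fintype.card X : ℝ) * cmin - Lp := by linarith
    rw [div_mul_eq_mul_div, le_div_iff₀ hpos]
    set L := l1 (fun x => mustar Q x - mustar Q' x) with hL
    have : L * ((Fintype.card X : ℝ) * cmin - Lp)
        = L - (Lp + 1 - (Fintype.card X : ℝ) * cmin) * L := by ring
    rw [this]
    have : (Fintype.card A : ℝ) * (φ * S) = φ * (Fintype.card A : ℝ) * S := by ring
    linarith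
end
end
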